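/- arXiv:2208.09951 — 4 statements merged into one kernel-verified Lean document; each statement's English description precedes it below -/
import Mathlib

section
/- Let M be a maximal group-fair matching in a bipartite graph where each item belongs to at most Δ groups, and let (y, w) be the dual assignment where y_{ap} = 1 iff (a,p) ∈ M and w_{p,h} = 1 iff the group-h constraint at p is tight. Then the dual objective Σ_{p,h} u_{p,h}·w_{p,h} + Σ_{(a,p)} y_{ap} is at most (Δ+1)·|M|. -/
theorem stmt_12 {A P : Type*} [Fintype A] [Fintype P] [DecidableEq A] [DecidableEq P]
    (χ : ℕ) (E : Finset (A × P)) (grp : Fin χ → Finset A) (Δ : ℕ)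
    (u : P → Fin χ → ℕ)
    (hΔ : ∀ a : A, (Finset.univ.filter (fun h => a ∈ grp h)).card ≤ Δ)
    (M : Finset (A × P)) (hME : M ⊆ E)
    (hmatch : ∀ a : A, (M.filter (fun e => e.1 = a)).card ≤ 1)
    (hgf : ∀ p h, (M.filter (fun e => e.2 = p ∧ e.1 ∈ grp h)).card ≤ u p h) :
    (∑ p : P, ∑ h : Fin χ,
        u p h * (if (M.filter (fun e => e.2 = p ∧ e.1 ∈ grp h)).card = u p h then 1 else 0))
      + M.card ≤ (Δ + 1) * M.card := by
  have key : (∑ p : P, ∑ h : Fin χ,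
        u p h * (if (M.filter (fun e => e.2 = p ∧ e.1 ∈ grp h)).card = u p h then 1 else 0))
      ≤ Δ * M.card := by
    calc (∑ p : P, ∑ h : Fin χ,
        u p h * (if (M.filter (fun e => e.2 = p ∧ e.1 ∈ grp h)).card = u p h then 1 else 0))
        ≤ ∑ p : P, ∑ h : Fin χ, (M.filter (fun e => e.2 = p ∧ e.1 ∈ grp h)).card := by
          apply Finset.sum_le_sum; intro p _
          apply Finset.sum_le_sum; intro h _
          split_ifs with hc
          · simp [hc]
          · simp
      _ = ∑ e ∈ M, (Finset.univ.filter (fun h => e.1 ∈ grp h)).card := by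
          simp only [Finset.card_filter, ite_and]
          conv_lhs => enter [2,p]; rw [Finset.sum_comm]
          rw [Finset.sum_comm]
          refine Finset.sum_congr rfl fun e _ => ?_
          rw [Finset.sum_comm]
          refine Finset.sum_congr rfl fun h _ => ?_
          rw [Finset.sum_ite_eq Finset.univ e.2 (fun _ => if e.1 ∈ grp h then (1:ℕ) else 0)]
          simp
      _ ≤ ∑ e ∈ M, Δ := Finset.sum_le_sum (fun e _ => hΔ e.1)
      _ = Δ * M.card := by rw [Finset.sum_const, smul_eq_mul, mul_comm]
  calc _ ≤ Δ * M.card + M.card := Nat.add_le_add_right key _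
    _ = (Δ + 1) * M.card := by ring
end

section
/- Consider nonnegative quantities satisfying: ‖x^(i)‖₁ = ‖x‖₁ − Σ_{j=1}^{i} α^(j)‖M^(j)‖₁ (in the sense of the residual iteration), where in every iteration j, ‖M^(j)‖₁ ≥ ‖x^(j-1)‖₁/(Δ+1). If i_c is the first iteration at which ‖x^(i_c)‖₁ < ‖x‖₁/2^c, then Σ_{j=1}^{i_c} α^(j) ≤ 2c(Δ+1). -/
open Finset Real

theorem stmt_15 {E : Type*} [Fintype E]
    (x M : ℕ → E → ℝ) (α : ℕ → ℝ) (Δ : ℝ) (c : ℕ) (ic : ℕ)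
    (hΔ : 0 ≤ Δ) (hc : 1 ≤ c)
    (hM : ∀ j e, 0 ≤ M j e)
    (hα : ∀ j, 0 < α j)
    (hiter : ∀ j e, x (j + 1) e = x j e - α (j + 1) * M (j + 1) e)
    (hxnn : ∀ j e, 0 ≤ x j e)
    (hfrac : ∀ j ∈ Finset.Icc 1 ic, (∑ e, x (j - 1) e) / (Δ + 1) ≤ ∑ e, M j e)
    (hfirst : ∑ e, x ic e < (∑ e, x 0 e) / 2 ^ c)
    (hbefore : ∀ j < ic, (∑ e, x 0 e) / 2 ^ c ≤ ∑ e, x j e) :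
    ∑ j ∈ Finset.Icc 1 ic, α j ≤ 2 * c * (Δ + 1) := by
  set S : ℕ → ℝ := fun j => ∑ e, x j e with hS
  have hSnn : ∀ j, 0 ≤ S j := fun j => Finset.sum_nonneg fun e _ => hxnn j e
  have hΔ1 : (0:ℝ) < Δ + 1 := by linarith
  have h2c : (1:ℝ) ≤ 2 ^ c := one_le_pow₀ (by norm_num)
  have h2cpos : (0:ℝ) < 2 ^ c := by positivity
  have hstep : ∀ j, S (j+1) = S j - α (j+1) * ∑ e, M (j+1) e := by
    intro j
    simp only [hS, Finset.mul_sum]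
    rw [← Finset.sum_sub_distrib]
    exact Finset.sum_congr rfl fun e _ => hiter j e
  have hMnn : ∀ j, (0:ℝ) ≤ ∑ e, M j e := fun j => Finset.sum_nonneg fun e _ => hM j e
  have hdec : ∀ j, S (j+1) ≤ S j := by
    intro j
    have h1 : 0 ≤ α (j+1) * ∑ e, M (j+1) e := mul_nonneg (hα (j+1)).le (hMnn (j+1))
    rw [hstep]; linarith
  have hS0pos : 0 < S 0 := by
    have h1 := hfirst
    have h2 := hSnn ic
    by_contra h
    push_neg at h
    have : S 0 = 0 := le_antisymm h (hSnn 0)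
    rw [show (∑ e, x 0 e) = S 0 from rfl, this] at h1
    simp at h1
    have : S ic < 0 := by simpa using h1
    linarith
  have hic1 : 1 ≤ ic := by
    by_contra h
    push_neg at h
    interval_cases ic
    have : S 0 / 2 ^ c ≤ S 0 := by
      rw [div_le_iff₀ h2cpos]
      nlinarith [hS0pos]
    exact absurd hfirst (not_lt.mpr this)
  -- key per-step inequality
  have hkey : ∀ i, i + 1 ≤ ic → α (i+1) * (S i / (Δ + 1)) ≤ S i - S (i+1) := by
    intro i hi
    have hmem : i + 1 ∈ Finset.Icc 1 ic := Finset.mem_Icc.mpr ⟨Nat.le_add_left 1 i, hi⟩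
    have h1 := hfrac (i+1) hmem
    simp only [Nat.add_sub_cancel] at h1
    have h2 : α (i+1) * (S i / (Δ + 1)) ≤ α (i+1) * ∑ e, M (i+1) e :=
      mul_le_mul_of_nonneg_left h1 (hα (i+1)).le
    have h3 := hstep i
    linarith
  -- positivity before ic
  have hpos : ∀ j, j < ic → 0 < S j := by
    intro j hj
    have := hbefore j hj
    have h1 : 0 < S 0 / 2 ^ c := div_pos hS0pos h2cpos
    linarith
  -- log bound for steps before the last
  have hlogstep : ∀ i, i + 1 < ic →
      α (i+1) ≤ (Δ + 1) * (Real.log (S i) - Real.log (S (i+1))) := by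
    intro i hi
    have hSi1 : 0 < S (i+1) := hpos (i+1) hi
    have hSi : 0 < S i := lt_of_lt_of_le hSi1 (hdec i)
    have hk := hkey i hi.le
    have hratio : 0 < S (i+1) / S i := div_pos hSi1 hSi
    have hlog := Real.log_le_sub_one_of_pos hratio
    rw [Real.log_div hSi1.ne' hSi.ne'] at hlog
    -- α (i+1) ≤ (Δ+1) * (1 - S(i+1)/S i)
    have h1 : α (i+1) * S i ≤ (Δ + 1) * (S i - S (i+1)) := by
      have := hkey i hi.le
      rw [div_eq_mul_inv] at this
      calc α (i+1) * S i = α (i+1) * (S i * (Δ+1)⁻¹) * (Δ+1) := by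
            field_simp
        _ ≤ (S i - S (i+1)) * (Δ + 1) := by
            apply mul_le_mul_of_nonneg_right _ hΔ1.le
            linarith [this]
        _ = (Δ + 1) * (S i - S (i+1)) := by ring
    have h2 : α (i+1) ≤ (Δ + 1) * (1 - S (i+1) / S i) := by
      apply le_of_mul_le_mul_right _ hSi
      have hr : (Δ + 1) * (1 - S (i+1) / S i) * S i = (Δ+1) * (S i - S (i+1)) := by
        field_simp
      rw [hr]; exact h1
    have h3 : 1 - S (i+1) / S i ≤ Real.log (S i) - Real.log (S (i+1)) := by
      have hd : S (i+1) / S i - 1 ≤ Real.log (S (i+1)) - Real.log (S i) → True := fun _ => trivial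
      linarith [hlog]
    nlinarith [h2, h3, hΔ1]
  -- rewrite the sum over Icc as sum over range
  have hsum : ∑ j ∈ Finset.Icc 1 ic, α j = ∑ i ∈ Finset.range ic, α (i + 1) := by
    rw [← Finset.Ico_add_one_right_eq_Icc, Finset.sum_Ico_eq_sum_range]
    simp [add_comm]
  rw [hsum]
  obtain ⟨n, rfl⟩ : ∃ n, ic = n + 1 := ⟨ic - 1, (Nat.succ_pred_eq_of_pos hic1).symm⟩
  rw [Finset.sum_range_succ]
  -- bound the last term: α (n+1) ≤ Δ + 1
  have hSn : 0 < S n := hpos n (Nat.lt_succ_self n)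
  have hlast : α (n + 1) ≤ Δ + 1 := by
    have hk := hkey n le_rfl
    have h1 : α (n+1) * S n ≤ (Δ + 1) * S n := by
      have h2 : S n - S (n+1) ≤ S n := by linarith [hSnn (n+1)]
      have : α (n+1) * (S n / (Δ+1)) ≤ S n := le_trans hk h2
      rw [div_eq_mul_inv] at this
      calc α (n+1) * S n = α (n+1) * (S n * (Δ+1)⁻¹) * (Δ+1) := by field_simp
        _ ≤ S n * (Δ+1) := mul_le_mul_of_nonneg_right (by linarith) hΔ1.le
        _ = (Δ+1) * S n := by ring
    exact le_of_mul_le_mul_right (by linarith) hSn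
  -- bound the initial sum via telescoping logs
  have hmain : ∑ i ∈ Finset.range n, α (i + 1) ≤ (Δ + 1) * (c * Real.log 2) := by
    have htel : ∑ i ∈ Finset.range n, (Real.log (S i) - Real.log (S (i+1)))
        = Real.log (S 0) - Real.log (S n) :=
      Finset.sum_range_sub' (fun i => Real.log (S i)) n
    have hb : ∑ i ∈ Finset.range n, α (i + 1)
        ≤ ∑ i ∈ Finset.range n, (Δ + 1) * (Real.log (S i) - Real.log (S (i+1))) := by
      apply Finset.sum_le_sum
      intro i hi
      have hi' := Finset.mem_range.mp hi
      exact hlogstep i (by omega)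
    rw [← Finset.mul_sum, htel] at hb
    have hratio : S 0 / S n ≤ 2 ^ c := by
      have := hbefore n (Nat.lt_succ_self n)
      rw [div_le_iff₀ hSn]
      rw [div_le_iff₀ h2cpos] at this
      nlinarith [this]
    have hlog2 : Real.log (S 0) - Real.log (S n) ≤ c * Real.log 2 := by
      have h1 : Real.log (S 0 / S n) ≤ Real.log ((2:ℝ) ^ c) :=
        Real.log_le_log (div_pos hS0pos hSn) hratio
      rw [Real.log_div hS0pos.ne' hSn.ne', Real.log_pow] at h1
      simpa using h1
    calc ∑ i ∈ Finset.range n, α (i + 1) ≤ (Δ+1) * (Real.log (S 0) - Real.log (S n)) := hb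
      _ ≤ (Δ+1) * (c * Real.log 2) := mul_le_mul_of_nonneg_left hlog2 hΔ1.le
  -- combine
  have hlog2lt : Real.log 2 < 0.6931471808 := Real.log_two_lt_d9
  have hc1 : (1:ℝ) ≤ c := by exact_mod_cast hc
  nlinarith [hmain, hlast, hΔ1, hlog2lt, hc1, mul_le_mul_of_nonneg_left hlog2lt.le (mul_nonneg hΔ1.le (by positivity : (0:ℝ) ≤ (c:ℝ)))]
end

section
/- Any basic feasible solution of the LP over variables x : E → [0,1] with constraints l_p ≤ Σ_{a∈N(p)} x_{ap} ≤ u_p for every platform p and l_{p,h} ≤ Σ_{a∈A_h} x_{ap} ≤ u_{p,h} for every platform p and group h, where all bounds l_p, u_p, l_{p,h}, u_{p,h} are integers and the groups A_h partition A, satisfies that Σ_{a∈N(p)} x_{ap} is an integer for every platform p. -/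
/-- Feasibility for the group-fair matching LP with platform bounds `lp, up` and
group bounds `lph, uph`, where variables live on edges `E` (and are zero off `E`). -/
lemma int_sum {ι : Type*} (t : Finset ι) (f : ι → ℝ)
    (h : ∀ i ∈ t, ∃ m : ℤ, f i = (m : ℝ)) : ∃ m : ℤ, ∑ i ∈ t, f i = (m : ℝ) := by
  classical
  induction t using Finset.induction_on with
  | empty => exact ⟨0, by simp⟩
  | insert a s hnotmem ih =>
    obtain ⟨m, hm⟩ := h _ (Finset.mem_insert_self _ _)
    obtain ⟨n, hn⟩ := ih (fun i hi => h i (Finset.mem_insert_of_mem hi))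
    exact ⟨m + n, by rw [Finset.sum_insert hnotmem, hm, hn]; push_cast; ring⟩

lemma frac_lt_int {s : ℝ} (hf : ¬∃ m : ℤ, s = (m : ℝ)) {l : ℤ} (h : (l:ℝ) ≤ s) : (l:ℝ) < s :=
  h.lt_of_ne (fun he => hf ⟨l, he.symm⟩)

lemma frac_lt_int' {s : ℝ} (hf : ¬∃ m : ℤ, s = (m : ℝ)) {u : ℤ} (h : s ≤ (u:ℝ)) : s < (u:ℝ) :=
  h.lt_of_ne (fun he => hf ⟨u, he⟩)

lemma frac_sum {A P : Type*} [DecidableEq A] {x : A × P → ℝ} {t : Finset A} {p : P} {a0 : A}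
    (ha0 : a0 ∈ t) (hfrac : ¬∃ m : ℤ, x (a0, p) = (m : ℝ))
    (hrest : ∀ a ∈ t, a ≠ a0 → ∃ m : ℤ, x (a, p) = (m : ℝ)) :
    ¬∃ m : ℤ, (∑ a ∈ t, x (a, p)) = (m : ℝ) := by
  rintro ⟨m, hm⟩
  obtain ⟨n, hn⟩ := int_sum (t.erase a0) (fun a => x (a, p))
    (fun a ha => hrest a (Finset.mem_of_mem_erase ha) (Finset.ne_of_mem_erase ha))
  have hsum : x (a0, p) + ∑ a ∈ t.erase a0, x (a, p) = ∑ a ∈ t, x (a, p) :=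
    Finset.add_sum_erase t (fun a => x (a, p)) ha0
  exact hfrac ⟨m - n, by push_cast; linarith⟩

lemma sum_ind {A P : Type*} [DecidableEq A] [DecidableEq P] (t : Finset A) (q : P) (a0 : A)
    (p : P) (c : ℝ) :
    (∑ a ∈ t, (if (a, q) = (a0, p) then c else 0)) = if q = p ∧ a0 ∈ t then c else 0 := by
  by_cases hq : q = p
  · subst hq
    simp [Prod.ext_iff, Finset.sum_ite_eq']
  · simp [Prod.ext_iff, hq]

def GFFeasible {A P : Type*} [Fintype A] [Fintype P] [DecidableEq A] [DecidableEq P]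
    {χ : ℕ} (E : Finset (A × P)) (grp : Fin χ → Finset A)
    (lp up : P → ℤ) (lph uph : P → Fin χ → ℤ) (x : A × P → ℝ) : Prop :=
  (∀ e ∈ E, 0 ≤ x e ∧ x e ≤ 1) ∧ (∀ e, e ∉ E → x e = 0) ∧
  (∀ p : P, (lp p : ℝ) ≤ ∑ a ∈ Finset.univ.filter (fun a => (a, p) ∈ E), x (a, p) ∧
      ∑ a ∈ Finset.univ.filter (fun a => (a, p) ∈ E), x (a, p) ≤ (up p : ℝ)) ∧
  (∀ p h, (lph p h : ℝ) ≤ ∑ a ∈ grp h, x (a, p) ∧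
      ∑ a ∈ grp h, x (a, p) ≤ (uph p h : ℝ))

section Main

variable {A P : Type*} [Fintype A] [Fintype P] [DecidableEq A] [DecidableEq P]
  {χ : ℕ} {E : Finset (A × P)} {grp : Fin χ → Finset A}
  {lp up : P → ℤ} {lph uph : P → Fin χ → ℤ} {x : A × P → ℝ}

lemma frac_facts (hfeas : GFFeasible E grp lp up lph uph x) {a : A} {p : P}
    (hf : ¬∃ m : ℤ, x (a, p) = (m : ℝ)) :
    (a, p) ∈ E ∧ 0 < x (a, p) ∧ x (a, p) < 1 := by
  have hE : (a, p) ∈ E := by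
    by_contra h
    exact hf ⟨0, by rw [hfeas.2.1 _ h]; norm_num⟩
  obtain ⟨h1, h2⟩ := hfeas.1 _ hE
  refine ⟨hE, lt_of_le_of_ne h1 ?_, lt_of_le_of_ne h2 ?_⟩
  · intro h; exact hf ⟨0, by rw [← h]; norm_num⟩
  · intro h; exact hf ⟨1, by rw [h]; norm_num⟩

lemma feas_add (hfeas : GFFeasible E grp lp up lph uph x) (d : A × P → ℝ)
    (hbox : ∀ e, d e ≠ 0 → e ∈ E ∧ |d e| ≤ x e ∧ |d e| ≤ 1 - x e)
    (hplat : ∀ p, |∑ a ∈ Finset.univ.filter (fun a => (a, p) ∈ E), d (a, p)| ≤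
        (∑ a ∈ Finset.univ.filter (fun a => (a, p) ∈ E), x (a, p)) - lp p ∧
      |∑ a ∈ Finset.univ.filter (fun a => (a, p) ∈ E), d (a, p)| ≤
        (up p : ℝ) - ∑ a ∈ Finset.univ.filter (fun a => (a, p) ∈ E), x (a, p))
    (hgrp : ∀ p h, |∑ a ∈ grp h, d (a, p)| ≤ (∑ a ∈ grp h, x (a, p)) - lph p h ∧
      |∑ a ∈ grp h, d (a, p)| ≤ (uph p h : ℝ) - ∑ a ∈ grp h, x (a, p)) :
    GFFeasible E grp lp up lph uph (fun e => x e + d e) := by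
  obtain ⟨hb, hz, hp, hg⟩ := hfeas
  refine ⟨?_, ?_, ?_, ?_⟩
  · intro e he
    by_cases hde : d e = 0
    · simpa [hde] using hb e he
    · obtain ⟨-, h1, h2⟩ := hbox e hde
      have h3 := neg_abs_le (d e)
      have h4 := le_abs_self (d e)
      constructor <;> dsimp only <;> linarith
  · intro e he
    have hde : d e = 0 := by
      by_contra h; exact he (hbox e h).1
    simp [hz e he, hde]
  · intro q
    have hsum : ∑ a ∈ Finset.univ.filter (fun a => (a, q) ∈ E), (x (a, q) + d (a, q)) =
        (∑ a ∈ Finset.univ.filter (fun a => (a, q) ∈ E), x (a, q)) +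
        ∑ a ∈ Finset.univ.filter (fun a => (a, q) ∈ E), d (a, q) := Finset.sum_add_distrib
    obtain ⟨h1, h2⟩ := hp q
    have h3 := neg_abs_le (∑ a ∈ Finset.univ.filter (fun a => (a, q) ∈ E), d (a, q))
    have h4 := le_abs_self (∑ a ∈ Finset.univ.filter (fun a => (a, q) ∈ E), d (a, q))
    obtain ⟨h5, h6⟩ := hplat q
    constructor <;> dsimp only <;> rw [hsum] <;> linarith
  · intro q h
    have hsum : ∑ a ∈ grp h, (x (a, q) + d (a, q)) =
        (∑ a ∈ grp h, x (a, q)) + ∑ a ∈ grp h, d (a, q) := Finset.sum_add_distrib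
    obtain ⟨h1, h2⟩ := hg q h
    have h3 := neg_abs_le (∑ a ∈ grp h, d (a, q))
    have h4 := le_abs_self (∑ a ∈ grp h, d (a, q))
    obtain ⟨h5, h6⟩ := hgrp q h
    constructor <;> dsimp only <;> rw [hsum] <;> linarith

lemma vertex_not (hfeas : GFFeasible E grp lp up lph uph x)
    (hvertex : ∀ (y z : A × P → ℝ) (t : ℝ), GFFeasible E grp lp up lph uph y →
      GFFeasible E grp lp up lph uph z → 0 < t → t < 1 →
      x = (fun e => t * y e + (1 - t) * z e) → y = z)
    (d : A × P → ℝ) (e0 : A × P) (hd0 : d e0 ≠ 0)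
    (hbox : ∀ e, d e ≠ 0 → e ∈ E ∧ |d e| ≤ x e ∧ |d e| ≤ 1 - x e)
    (hplat : ∀ p, |∑ a ∈ Finset.univ.filter (fun a => (a, p) ∈ E), d (a, p)| ≤
        (∑ a ∈ Finset.univ.filter (fun a => (a, p) ∈ E), x (a, p)) - lp p ∧
      |∑ a ∈ Finset.univ.filter (fun a => (a, p) ∈ E), d (a, p)| ≤
        (up p : ℝ) - ∑ a ∈ Finset.univ.filter (fun a => (a, p) ∈ E), x (a, p))
    (hgrp : ∀ p h, |∑ a ∈ grp h, d (a, p)| ≤ (∑ a ∈ grp h, x (a, p)) - lph p h ∧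
      |∑ a ∈ grp h, d (a, p)| ≤ (uph p h : ℝ) - ∑ a ∈ grp h, x (a, p)) : False := by
  have hy := feas_add hfeas d hbox hplat hgrp
  have hz := feas_add hfeas (fun e => -d e)
    (by intro e he
        simp only [neg_ne_zero] at he
        simpa [abs_neg] using hbox e he)
    (by intro q
        simpa [Finset.sum_neg_distrib, abs_neg] using hplat q)
    (by intro q h
        simpa [Finset.sum_neg_distrib, abs_neg] using hgrp q h)
  have heq := hvertex _ _ (1/2) hy hz (by norm_num) (by norm_num)
    (by funext e; ring)
  have h2 := congrFun heq e0
  apply hd0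
  linarith

lemma lemmaA (hfeas : GFFeasible E grp lp up lph uph x)
    (hvertex : ∀ (y z : A × P → ℝ) (t : ℝ), GFFeasible E grp lp up lph uph y →
      GFFeasible E grp lp up lph uph z → 0 < t → t < 1 →
      x = (fun e => t * y e + (1 - t) * z e) → y = z)
    (hdisj : ∀ h h' : Fin χ, h ≠ h' → Disjoint (grp h) (grp h'))
    (p : P) (h : Fin χ) (a0 a1 : A) (ha0 : a0 ∈ grp h) (ha1 : a1 ∈ grp h) (hne : a0 ≠ a1)
    (hf0 : ¬∃ m : ℤ, x (a0, p) = (m : ℝ)) (hf1 : ¬∃ m : ℤ, x (a1, p) = (m : ℝ)) : False := by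
  obtain ⟨hE0, hx0l, hx0u⟩ := frac_facts hfeas hf0
  obtain ⟨hE1, hx1l, hx1u⟩ := frac_facts hfeas hf1
  set ε := min (min (x (a0,p)) (1 - x (a0,p))) (min (x (a1,p)) (1 - x (a1,p))) with hε
  have hεpos : 0 < ε := lt_min (lt_min hx0l (by linarith)) (lt_min hx1l (by linarith))
  have hεx0 : ε ≤ x (a0,p) := le_trans (min_le_left _ _) (min_le_left _ _)
  have hεx0' : ε ≤ 1 - x (a0,p) := le_trans (min_le_left _ _) (min_le_right _ _)
  have hεx1 : ε ≤ x (a1,p) := le_trans (min_le_right _ _) (min_le_left _ _)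
  have hεx1' : ε ≤ 1 - x (a1,p) := le_trans (min_le_right _ _) (min_le_right _ _)
  set d : A × P → ℝ :=
    fun e => (if e = (a0,p) then ε else 0) + (if e = (a1,p) then -ε else 0) with hd
  have hd0 : d (a0,p) = ε := by simp [hd, Prod.ext_iff, hne]
  have hd1 : d (a1,p) = -ε := by simp [hd, Prod.ext_iff, Ne.symm hne]
  have hiff : ∀ h', (a0 ∈ grp h') ↔ (a1 ∈ grp h') := by
    intro h'
    constructor <;> intro hm
    · have hh : h' = h := by
        by_contra hne'
        exact (Finset.disjoint_left.mp (hdisj h' h hne') hm) ha0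
      exact hh ▸ ha1
    · have hh : h' = h := by
        by_contra hne'
        exact (Finset.disjoint_left.mp (hdisj h' h hne') hm) ha1
      exact hh ▸ ha0
  have hsum : ∀ (t : Finset A) (q : P), (∑ a ∈ t, d (a, q)) =
      (if q = p ∧ a0 ∈ t then ε else 0) + (if q = p ∧ a1 ∈ t then -ε else 0) := by
    intro t q
    simp only [hd]
    rw [Finset.sum_add_distrib, sum_ind, sum_ind]
  refine vertex_not hfeas hvertex d (a0, p) (by rw [hd0]; exact ne_of_gt hεpos) ?_ ?_ ?_
  · intro e hde
    by_cases he0 : e = (a0, p)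
    · subst he0
      rw [hd0, abs_of_pos hεpos]
      exact ⟨hE0, hεx0, hεx0'⟩
    · by_cases he1 : e = (a1, p)
      · subst he1
        rw [hd1, abs_neg, abs_of_pos hεpos]
        exact ⟨hE1, hεx1, hεx1'⟩
      · exfalso; apply hde; simp [hd, he0, he1]
  · intro q
    have hZ : (∑ a ∈ Finset.univ.filter (fun a => (a, q) ∈ E), d (a, q)) = 0 := by
      rw [hsum]
      by_cases hq : q = p
      · have m0 : a0 ∈ Finset.univ.filter (fun a => (a, q) ∈ E) := by
          simp [Finset.mem_filter, hq, hE0]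
        have m1 : a1 ∈ Finset.univ.filter (fun a => (a, q) ∈ E) := by
          simp [Finset.mem_filter, hq, hE1]
        rw [if_pos ⟨hq, m0⟩, if_pos ⟨hq, m1⟩]; ring
      · rw [if_neg (fun hc => hq hc.1), if_neg (fun hc => hq hc.1)]; ring
    rw [hZ, abs_zero]
    constructor <;> linarith [(hfeas.2.2.1 q).1, (hfeas.2.2.1 q).2]
  · intro q h'
    have hZ : (∑ a ∈ grp h', d (a, q)) = 0 := by
      rw [hsum]
      by_cases hq : q = p
      · by_cases hm : a0 ∈ grp h'
        · rw [if_pos ⟨hq, hm⟩, if_pos ⟨hq, (hiff h').mp hm⟩]; ring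
        · rw [if_neg (fun hc => hm hc.2), if_neg (fun hc => hm ((hiff h').mpr hc.2))]; ring
      · rw [if_neg (fun hc => hq hc.1), if_neg (fun hc => hq hc.1)]; ring
    rw [hZ, abs_zero]
    constructor <;> linarith [(hfeas.2.2.2 q h').1, (hfeas.2.2.2 q h').2]


lemma lemmaB (hfeas : GFFeasible E grp lp up lph uph x)
    (hvertex : ∀ (y z : A × P → ℝ) (t : ℝ), GFFeasible E grp lp up lph uph y →
      GFFeasible E grp lp up lph uph z → 0 < t → t < 1 →
      x = (fun e => t * y e + (1 - t) * z e) → y = z)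
    (hdisj : ∀ h h' : Fin χ, h ≠ h' → Disjoint (grp h) (grp h'))
    (p : P) (h0 h1 : Fin χ) (a0 a1 : A) (hgne : h0 ≠ h1)
    (ha0 : a0 ∈ grp h0) (ha1 : a1 ∈ grp h1)
    (hf0 : ¬∃ m : ℤ, x (a0, p) = (m : ℝ)) (hf1 : ¬∃ m : ℤ, x (a1, p) = (m : ℝ))
    (hs0 : ¬∃ m : ℤ, (∑ a ∈ grp h0, x (a, p)) = (m : ℝ))
    (hs1 : ¬∃ m : ℤ, (∑ a ∈ grp h1, x (a, p)) = (m : ℝ)) : False := by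
  obtain ⟨hE0, hx0l, hx0u⟩ := frac_facts hfeas hf0
  obtain ⟨hE1, hx1l, hx1u⟩ := frac_facts hfeas hf1
  have hane : a0 ≠ a1 := by
    intro hc
    rw [hc] at ha0
    exact Finset.disjoint_left.mp (hdisj h0 h1 hgne) ha0 ha1
  have hl0 : (lph p h0 : ℝ) < ∑ a ∈ grp h0, x (a, p) := frac_lt_int hs0 (hfeas.2.2.2 p h0).1
  have hu0 : ∑ a ∈ grp h0, x (a, p) < (uph p h0 : ℝ) := frac_lt_int' hs0 (hfeas.2.2.2 p h0).2
  have hl1 : (lph p h1 : ℝ) < ∑ a ∈ grp h1, x (a, p) := frac_lt_int hs1 (hfeas.2.2.2 p h1).1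
  have hu1 : ∑ a ∈ grp h1, x (a, p) < (uph p h1 : ℝ) := frac_lt_int' hs1 (hfeas.2.2.2 p h1).2
  set ε := min (min (min (x (a0,p)) (1 - x (a0,p))) (min (x (a1,p)) (1 - x (a1,p))))
    (min (min ((∑ a ∈ grp h0, x (a, p)) - lph p h0) ((uph p h0 : ℝ) - ∑ a ∈ grp h0, x (a, p)))
      (min ((∑ a ∈ grp h1, x (a, p)) - lph p h1) ((uph p h1 : ℝ) - ∑ a ∈ grp h1, x (a, p))))
    with hε
  have hεpos : 0 < ε := by
    refine lt_min (lt_min (lt_min hx0l ?_) (lt_min hx1l ?_))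
      (lt_min (lt_min ?_ ?_) (lt_min ?_ ?_)) <;> linarith
  have hεx0 : ε ≤ x (a0,p) :=
    le_trans (min_le_left _ _) (le_trans (min_le_left _ _) (min_le_left _ _))
  have hεx0' : ε ≤ 1 - x (a0,p) :=
    le_trans (min_le_left _ _) (le_trans (min_le_left _ _) (min_le_right _ _))
  have hεx1 : ε ≤ x (a1,p) :=
    le_trans (min_le_left _ _) (le_trans (min_le_right _ _) (min_le_left _ _))
  have hεx1' : ε ≤ 1 - x (a1,p) :=
    le_trans (min_le_left _ _) (le_trans (min_le_right _ _) (min_le_right _ _))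
  have hεs0 : ε ≤ (∑ a ∈ grp h0, x (a, p)) - lph p h0 :=
    le_trans (min_le_right _ _) (le_trans (min_le_left _ _) (min_le_left _ _))
  have hεs0' : ε ≤ (uph p h0 : ℝ) - ∑ a ∈ grp h0, x (a, p) :=
    le_trans (min_le_right _ _) (le_trans (min_le_left _ _) (min_le_right _ _))
  have hεs1 : ε ≤ (∑ a ∈ grp h1, x (a, p)) - lph p h1 :=
    le_trans (min_le_right _ _) (le_trans (min_le_right _ _) (min_le_left _ _))
  have hεs1' : ε ≤ (uph p h1 : ℝ) - ∑ a ∈ grp h1, x (a, p) :=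
    le_trans (min_le_right _ _) (le_trans (min_le_right _ _) (min_le_right _ _))
  set d : A × P → ℝ :=
    fun e => (if e = (a0,p) then ε else 0) + (if e = (a1,p) then -ε else 0) with hd
  have hd0 : d (a0,p) = ε := by simp [hd, Prod.ext_iff, hane]
  have hd1 : d (a1,p) = -ε := by simp [hd, Prod.ext_iff, Ne.symm hane]
  have hmem0 : ∀ h', a0 ∈ grp h' ↔ h' = h0 := by
    intro h'
    constructor
    · intro hm
      by_contra hne'
      exact Finset.disjoint_left.mp (hdisj h' h0 hne') hm ha0
    · intro hh; exact hh ▸ ha0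
  have hmem1 : ∀ h', a1 ∈ grp h' ↔ h' = h1 := by
    intro h'
    constructor
    · intro hm
      by_contra hne'
      exact Finset.disjoint_left.mp (hdisj h' h1 hne') hm ha1
    · intro hh; exact hh ▸ ha1
  have hsum : ∀ (t : Finset A) (q : P), (∑ a ∈ t, d (a, q)) =
      (if q = p ∧ a0 ∈ t then ε else 0) + (if q = p ∧ a1 ∈ t then -ε else 0) := by
    intro t q
    simp only [hd]
    rw [Finset.sum_add_distrib, sum_ind, sum_ind]
  refine vertex_not hfeas hvertex d (a0, p) (by rw [hd0]; exact ne_of_gt hεpos) ?_ ?_ ?_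
  · intro e hde
    by_cases he0 : e = (a0, p)
    · subst he0
      rw [hd0, abs_of_pos hεpos]
      exact ⟨hE0, hεx0, hεx0'⟩
    · by_cases he1 : e = (a1, p)
      · subst he1
        rw [hd1, abs_neg, abs_of_pos hεpos]
        exact ⟨hE1, hεx1, hεx1'⟩
      · exfalso; apply hde; simp [hd, he0, he1]
  · intro q
    have hZ : (∑ a ∈ Finset.univ.filter (fun a => (a, q) ∈ E), d (a, q)) = 0 := by
      rw [hsum]
      by_cases hq : q = p
      · have m0 : a0 ∈ Finset.univ.filter (fun a => (a, q) ∈ E) := by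
          simp [Finset.mem_filter, hq, hE0]
        have m1 : a1 ∈ Finset.univ.filter (fun a => (a, q) ∈ E) := by
          simp [Finset.mem_filter, hq, hE1]
        rw [if_pos ⟨hq, m0⟩, if_pos ⟨hq, m1⟩]; ring
      · rw [if_neg (fun hc => hq hc.1), if_neg (fun hc => hq hc.1)]; ring
    rw [hZ, abs_zero]
    constructor <;> linarith [(hfeas.2.2.1 q).1, (hfeas.2.2.1 q).2]
  · intro q h'
    by_cases hq : q = p
    · subst hq
      by_cases hh0' : h' = h0
      · rw [hh0']
        have hZ : (∑ a ∈ grp h0, d (a, q)) = ε := by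
          rw [hsum, if_pos ⟨rfl, ha0⟩,
            if_neg (by rintro ⟨-, hm⟩; exact hgne ((hmem1 h0).mp hm))]
          ring
        rw [hZ, abs_of_pos hεpos]
        exact ⟨hεs0, hεs0'⟩
      · by_cases hh1' : h' = h1
        · rw [hh1']
          have hZ : (∑ a ∈ grp h1, d (a, q)) = -ε := by
            rw [hsum, if_neg (by rintro ⟨-, hm⟩; exact hgne ((hmem0 h1).mp hm).symm),
              if_pos ⟨rfl, ha1⟩]
            ring
          rw [hZ, abs_neg, abs_of_pos hεpos]
          exact ⟨hεs1, hεs1'⟩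
        · have hZ : (∑ a ∈ grp h', d (a, q)) = 0 := by
            rw [hsum, if_neg (by rintro ⟨-, hm⟩; exact hh0' ((hmem0 h').mp hm)),
              if_neg (by rintro ⟨-, hm⟩; exact hh1' ((hmem1 h').mp hm))]
            ring
          rw [hZ, abs_zero]
          constructor <;> linarith [(hfeas.2.2.2 q h').1, (hfeas.2.2.2 q h').2]
    · have hZ : (∑ a ∈ grp h', d (a, q)) = 0 := by
        rw [hsum, if_neg (fun hc => hq hc.1), if_neg (fun hc => hq hc.1)]; ring
      rw [hZ, abs_zero]
      constructor <;> linarith [(hfeas.2.2.2 q h').1, (hfeas.2.2.2 q h').2]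


lemma lemmaC (hfeas : GFFeasible E grp lp up lph uph x)
    (hvertex : ∀ (y z : A × P → ℝ) (t : ℝ), GFFeasible E grp lp up lph uph y →
      GFFeasible E grp lp up lph uph z → 0 < t → t < 1 →
      x = (fun e => t * y e + (1 - t) * z e) → y = z)
    (hdisj : ∀ h h' : Fin χ, h ≠ h' → Disjoint (grp h) (grp h'))
    (p : P) (h0 : Fin χ) (a0 : A) (ha0 : a0 ∈ grp h0)
    (hf0 : ¬∃ m : ℤ, x (a0, p) = (m : ℝ))
    (hs0 : ¬∃ m : ℤ, (∑ a ∈ grp h0, x (a, p)) = (m : ℝ))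
    (hS : ¬∃ m : ℤ, (∑ a ∈ Finset.univ.filter (fun a => (a, p) ∈ E), x (a, p)) = (m : ℝ)) :
    False := by
  obtain ⟨hE0, hx0l, hx0u⟩ := frac_facts hfeas hf0
  have hl0 : (lph p h0 : ℝ) < ∑ a ∈ grp h0, x (a, p) := frac_lt_int hs0 (hfeas.2.2.2 p h0).1
  have hu0 : ∑ a ∈ grp h0, x (a, p) < (uph p h0 : ℝ) := frac_lt_int' hs0 (hfeas.2.2.2 p h0).2
  have hlS : (lp p : ℝ) < ∑ a ∈ Finset.univ.filter (fun a => (a, p) ∈ E), x (a, p) :=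
    frac_lt_int hS (hfeas.2.2.1 p).1
  have huS : ∑ a ∈ Finset.univ.filter (fun a => (a, p) ∈ E), x (a, p) < (up p : ℝ) :=
    frac_lt_int' hS (hfeas.2.2.1 p).2
  set ε := min (min (x (a0,p)) (1 - x (a0,p)))
    (min (min ((∑ a ∈ grp h0, x (a, p)) - lph p h0) ((uph p h0 : ℝ) - ∑ a ∈ grp h0, x (a, p)))
      (min ((∑ a ∈ Finset.univ.filter (fun a => (a, p) ∈ E), x (a, p)) - lp p)
        ((up p : ℝ) - ∑ a ∈ Finset.univ.filter (fun a => (a, p) ∈ E), x (a, p)))) with hε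
  have hεpos : 0 < ε := by
    refine lt_min (lt_min hx0l ?_) (lt_min (lt_min ?_ ?_) (lt_min ?_ ?_)) <;> linarith
  have hεx0 : ε ≤ x (a0,p) := le_trans (min_le_left _ _) (min_le_left _ _)
  have hεx0' : ε ≤ 1 - x (a0,p) := le_trans (min_le_left _ _) (min_le_right _ _)
  have hεs0 : ε ≤ (∑ a ∈ grp h0, x (a, p)) - lph p h0 :=
    le_trans (min_le_right _ _) (le_trans (min_le_left _ _) (min_le_left _ _))
  have hεs0' : ε ≤ (uph p h0 : ℝ) - ∑ a ∈ grp h0, x (a, p) :=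
    le_trans (min_le_right _ _) (le_trans (min_le_left _ _) (min_le_right _ _))
  have hεS : ε ≤ (∑ a ∈ Finset.univ.filter (fun a => (a, p) ∈ E), x (a, p)) - lp p :=
    le_trans (min_le_right _ _) (le_trans (min_le_right _ _) (min_le_left _ _))
  have hεS' : ε ≤ (up p : ℝ) - ∑ a ∈ Finset.univ.filter (fun a => (a, p) ∈ E), x (a, p) :=
    le_trans (min_le_right _ _) (le_trans (min_le_right _ _) (min_le_right _ _))
  set d : A × P → ℝ := fun e => if e = (a0,p) then ε else 0 with hd
  have hd0 : d (a0,p) = ε := by simp [hd]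
  have hmem0 : ∀ h', a0 ∈ grp h' ↔ h' = h0 := by
    intro h'
    constructor
    · intro hm
      by_contra hne'
      exact Finset.disjoint_left.mp (hdisj h' h0 hne') hm ha0
    · intro hh; exact hh ▸ ha0
  have hsum : ∀ (t : Finset A) (q : P), (∑ a ∈ t, d (a, q)) =
      (if q = p ∧ a0 ∈ t then ε else 0) := by
    intro t q
    simp only [hd]
    rw [sum_ind]
  refine vertex_not hfeas hvertex d (a0, p) (by rw [hd0]; exact ne_of_gt hεpos) ?_ ?_ ?_
  · intro e hde
    by_cases he0 : e = (a0, p)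
    · subst he0
      rw [hd0, abs_of_pos hεpos]
      exact ⟨hE0, hεx0, hεx0'⟩
    · exfalso; apply hde; simp [hd, he0]
  · intro q
    by_cases hq : q = p
    · subst hq
      have m0 : a0 ∈ Finset.univ.filter (fun a => (a, q) ∈ E) := by
        simp [Finset.mem_filter, hE0]
      have hZ : (∑ a ∈ Finset.univ.filter (fun a => (a, q) ∈ E), d (a, q)) = ε := by
        rw [hsum, if_pos ⟨rfl, m0⟩]
      rw [hZ, abs_of_pos hεpos]
      exact ⟨hεS, hεS'⟩
    · have hZ : (∑ a ∈ Finset.univ.filter (fun a => (a, q) ∈ E), d (a, q)) = 0 := by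
        rw [hsum, if_neg (fun hc => hq hc.1)]
      rw [hZ, abs_zero]
      constructor <;> linarith [(hfeas.2.2.1 q).1, (hfeas.2.2.1 q).2]
  · intro q h'
    by_cases hq : q = p
    · subst hq
      by_cases hh0' : h' = h0
      · rw [hh0']
        have hZ : (∑ a ∈ grp h0, d (a, q)) = ε := by
          rw [hsum, if_pos ⟨rfl, ha0⟩]
        rw [hZ, abs_of_pos hεpos]
        exact ⟨hεs0, hεs0'⟩
      · have hZ : (∑ a ∈ grp h', d (a, q)) = 0 := by
          rw [hsum, if_neg (by rintro ⟨-, hm⟩; exact hh0' ((hmem0 h').mp hm))]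
        rw [hZ, abs_zero]
        constructor <;> linarith [(hfeas.2.2.2 q h').1, (hfeas.2.2.2 q h').2]
    · have hZ : (∑ a ∈ grp h', d (a, q)) = 0 := by
        rw [hsum, if_neg (fun hc => hq hc.1)]
      rw [hZ, abs_zero]
      constructor <;> linarith [(hfeas.2.2.2 q h').1, (hfeas.2.2.2 q h').2]

end Main

theorem stmt_17 {A P : Type*} [Fintype A] [Fintype P] [DecidableEq A] [DecidableEq P]
    (χ : ℕ) (E : Finset (A × P)) (grp : Fin χ → Finset A)
    (hdisj : ∀ h h' : Fin χ, h ≠ h' → Disjoint (grp h) (grp h'))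
    (hpart : ∀ a : A, ∃ h, a ∈ grp h)
    (lp up : P → ℤ) (lph uph : P → Fin χ → ℤ)
    (x : A × P → ℝ)
    (hfeas : GFFeasible E grp lp up lph uph x)
    (hvertex : ∀ (y z : A × P → ℝ) (t : ℝ), GFFeasible E grp lp up lph uph y →
      GFFeasible E grp lp up lph uph z → 0 < t → t < 1 →
      x = (fun e => t * y e + (1 - t) * z e) → y = z) :
    ∀ p : P, ∃ m : ℤ,
      ∑ a ∈ Finset.univ.filter (fun a => (a, p) ∈ E), x (a, p) = (m : ℝ) := by
  classical
  have key : ∀ a p, ∃ m : ℤ, x (a, p) = (m : ℝ) := by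
    by_contra hcon
    push_neg at hcon
    obtain ⟨a0, p, hA0⟩ := hcon
    have hfrac0 : ¬∃ m : ℤ, x (a0, p) = (m : ℝ) := by push_neg; exact hA0
    obtain ⟨hE0, hx0l, hx0u⟩ := frac_facts hfeas hfrac0
    obtain ⟨h0, hh0⟩ := hpart a0
    -- any fractional edge at p has a fractional group sum
    have hGF : ∀ (a : A) (h : Fin χ), a ∈ grp h → (¬∃ m : ℤ, x (a, p) = (m : ℝ)) →
        ¬∃ m : ℤ, (∑ b ∈ grp h, x (b, p)) = (m : ℝ) := by
      intro a h hm hf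
      refine frac_sum hm hf ?_
      intro b hb hbne
      by_contra hbf
      exact lemmaA hfeas hvertex hdisj p h b a hb hm hbne hbf hf
    -- every other item is integral at p
    have hone : ∀ a1, a1 ≠ a0 → ∃ m : ℤ, x (a1, p) = (m : ℝ) := by
      intro a1 hne
      by_contra hf1
      obtain ⟨h1, hh1⟩ := hpart a1
      by_cases hgh : h1 = h0
      · exact lemmaA hfeas hvertex hdisj p h0 a0 a1 hh0 (hgh ▸ hh1) (Ne.symm hne) hfrac0 hf1
      · exact lemmaB hfeas hvertex hdisj p h0 h1 a0 a1 (fun hc => hgh hc.symm) hh0 hh1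
          hfrac0 hf1 (hGF a0 h0 hh0 hfrac0) (hGF a1 h1 hh1 hf1)
    have hSpf : ¬∃ m : ℤ, (∑ a ∈ Finset.univ.filter (fun a => (a, p) ∈ E), x (a, p)) = (m : ℝ) :=
      frac_sum (by simp [Finset.mem_filter, hE0]) hfrac0 (fun a _ hne => hone a hne)
    exact lemmaC hfeas hvertex hdisj p h0 a0 hh0 hfrac0 (hGF a0 h0 hh0 hfrac0) hSpf
  intro p
  exact int_sum _ _ (fun a _ => key a p)
end

section
/- When the groups are pairwise disjoint and all bounds l_p, u_p, l_{p,h}, u_{p,h} are integers, every vertex (basic feasible solution) of the polytope {x : E → [0,1] : l_p ≤ Σ_{a∈N(p)} x_{ap} ≤ u_p ∀p, l_{p,h} ≤ Σ_{a∈A_h} x_{ap} ≤ u_{p,h} ∀p,h} is integral, i.e., x_{ap} ∈ {0,1} for all edges. -/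
lemma sum_two' {A : Type*} [DecidableEq A] (s : Finset A) (b c : A) (hbc : b ≠ c) (ε : ℝ) :
    ∑ a ∈ s, (if a = b then ε else if a = c then -ε else 0)
      = (if b ∈ s then ε else 0) + (if c ∈ s then -ε else 0) := by
  have key : ∀ a, (if a = b then ε else if a = c then -ε else 0)
      = (if a = b then ε else 0) + (if a = c then -ε else 0) := by
    intro a
    by_cases h1 : a = b
    · subst h1; simp [hbc]
    · by_cases h2 : a = c
      · subst h2; simp [Ne.symm hbc, h1]
      · simp [h1, h2]
  simp only [key]
  rw [Finset.sum_add_distrib, Finset.sum_ite_eq' s b (fun _ => ε),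
    Finset.sum_ite_eq' s c (fun _ => -ε)]

lemma exists_int_sum' {A : Type*} [DecidableEq A] (t : Finset A) (f : A → ℝ)
    (hf : ∀ c ∈ t, f c = 0 ∨ f c = 1) : ∃ n : ℤ, ∑ c ∈ t, f c = (n : ℝ) := by
  induction t using Finset.induction_on with
  | empty => exact ⟨0, by simp⟩
  | insert a t ha ih =>
    obtain ⟨n, hn⟩ := ih (fun c hc => hf c (Finset.mem_insert_of_mem hc))
    rcases hf a (Finset.mem_insert_self a t) with h | h
    · exact ⟨n, by rw [Finset.sum_insert ha, h, hn]; ring⟩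
    · exact ⟨n + 1, by rw [Finset.sum_insert ha, h, hn]; push_cast; ring⟩

lemma strict_between' (l u n : ℤ) (φ : ℝ) (h0 : 0 < φ) (h1 : φ < 1)
    (hl : (l : ℝ) ≤ φ + n) (hu : φ + n ≤ (u : ℝ)) : (l : ℝ) < φ + n ∧ φ + n < (u : ℝ) := by
  constructor
  · rcases lt_or_eq_of_le hl with h | h
    · exact h
    · exfalso
      have h2 : (0:ℝ) < ((l - n : ℤ) : ℝ) := by push_cast; linarith
      have h3 : ((l - n : ℤ) : ℝ) < 1 := by push_cast; linarith
      have h2' : (0:ℤ) < l - n := by exact_mod_cast h2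
      have h3' : (l - n : ℤ) < 1 := by exact_mod_cast h3
      omega
  · rcases lt_or_eq_of_le hu with h | h
    · exact h
    · exfalso
      have h2 : (0:ℝ) < ((u - n : ℤ) : ℝ) := by push_cast; linarith
      have h3 : ((u - n : ℤ) : ℝ) < 1 := by push_cast; linarith
      have h2' : (0:ℤ) < u - n := by exact_mod_cast h2
      have h3' : (u - n : ℤ) < 1 := by exact_mod_cast h3
      omega

lemma exists_eps8' (v1 v2 v3 v4 v5 v6 v7 v8 : ℝ) (h1 : 0 < v1) (h2 : 0 < v2) (h3 : 0 < v3)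
    (h4 : 0 < v4) (h5 : 0 < v5) (h6 : 0 < v6) (h7 : 0 < v7) (h8 : 0 < v8) :
    ∃ ε : ℝ, 0 < ε ∧ ε ≤ v1 ∧ ε ≤ v2 ∧ ε ≤ v3 ∧ ε ≤ v4 ∧ ε ≤ v5 ∧ ε ≤ v6 ∧ ε ≤ v7 ∧ ε ≤ v8 := by
  refine ⟨min (min (min v1 v2) (min v3 v4)) (min (min v5 v6) (min v7 v8)),
    ?_, ?_, ?_, ?_, ?_, ?_, ?_, ?_, ?_⟩ <;>
  simp [lt_min_iff, min_le_iff, le_refl] <;> tauto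

lemma gf_perturb1 {A P : Type*} [Fintype A] [Fintype P] [DecidableEq A] [DecidableEq P]
    {χ : ℕ} (E : Finset (A × P)) (grp : Fin χ → Finset A)
    (lp up : P → ℤ) (lph uph : P → Fin χ → ℤ) (x : A × P → ℝ)
    (hfeas : GFFeasible E grp lp up lph uph x) (p₀ : P) (d : A → ℝ)
    (hsupp : ∀ a, (a, p₀) ∉ E → d a = 0)
    (hbox : ∀ a, (a, p₀) ∈ E → 0 ≤ x (a, p₀) + d a ∧ x (a, p₀) + d a ≤ 1)
    (htot1 : (lp p₀ : ℝ) ≤ (∑ a ∈ Finset.univ.filter (fun a => (a, p₀) ∈ E), x (a, p₀))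
        + ∑ a ∈ Finset.univ.filter (fun a => (a, p₀) ∈ E), d a)
    (htot2 : (∑ a ∈ Finset.univ.filter (fun a => (a, p₀) ∈ E), x (a, p₀))
        + (∑ a ∈ Finset.univ.filter (fun a => (a, p₀) ∈ E), d a) ≤ (up p₀ : ℝ))
    (hgrp1 : ∀ h, (lph p₀ h : ℝ) ≤ (∑ a ∈ grp h, x (a, p₀)) + ∑ a ∈ grp h, d a)
    (hgrp2 : ∀ h, (∑ a ∈ grp h, x (a, p₀)) + (∑ a ∈ grp h, d a) ≤ (uph p₀ h : ℝ)) :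
    GFFeasible E grp lp up lph uph (fun e => x e + if e.2 = p₀ then d e.1 else 0) := by
  obtain ⟨hb, h0, hp, hg⟩ := hfeas
  refine ⟨?_, ?_, ?_, ?_⟩
  · rintro ⟨a, p⟩ he
    by_cases hpp : p = p₀
    · subst hpp; simpa using hbox a he
    · simpa [hpp] using hb _ he
  · rintro ⟨a, p⟩ he
    by_cases hpp : p = p₀
    · subst hpp; simp [hsupp a he, h0 _ he]
    · simp [hpp, h0 _ he]
  · intro p
    by_cases hpp : p = p₀
    · subst hpp
      simpa [Finset.sum_add_distrib] using ⟨htot1, htot2⟩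
    · simpa [hpp] using hp p
  · intro p h
    by_cases hpp : p = p₀
    · subst hpp
      simpa [Finset.sum_add_distrib] using ⟨hgrp1 h, hgrp2 h⟩
    · simpa [hpp] using hg p h

lemma gf_vertex_perturb {A P : Type*} [Fintype A] [Fintype P] [DecidableEq A] [DecidableEq P]
    {χ : ℕ} (E : Finset (A × P)) (grp : Fin χ → Finset A)
    (lp up : P → ℤ) (lph uph : P → Fin χ → ℤ) (x : A × P → ℝ)
    (hfeas : GFFeasible E grp lp up lph uph x)
    (hvertex : ∀ y z : A × P → ℝ, GFFeasible E grp lp up lph uph y →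
      GFFeasible E grp lp up lph uph z →
      x = (fun e => (1 / 2) * y e + (1 / 2) * z e) → y = z)
    (p₀ : P) (d : A → ℝ)
    (hsupp : ∀ a, (a, p₀) ∉ E → d a = 0)
    (hbox2 : ∀ a, (a, p₀) ∈ E → 0 ≤ x (a, p₀) + d a ∧ x (a, p₀) + d a ≤ 1 ∧
      0 ≤ x (a, p₀) - d a ∧ x (a, p₀) - d a ≤ 1)
    (htot : (lp p₀ : ℝ) ≤ (∑ a ∈ Finset.univ.filter (fun a => (a, p₀) ∈ E), x (a, p₀))
        + (∑ a ∈ Finset.univ.filter (fun a => (a, p₀) ∈ E), d a) ∧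
      (∑ a ∈ Finset.univ.filter (fun a => (a, p₀) ∈ E), x (a, p₀))
        + (∑ a ∈ Finset.univ.filter (fun a => (a, p₀) ∈ E), d a) ≤ (up p₀ : ℝ) ∧
      (lp p₀ : ℝ) ≤ (∑ a ∈ Finset.univ.filter (fun a => (a, p₀) ∈ E), x (a, p₀))
        - (∑ a ∈ Finset.univ.filter (fun a => (a, p₀) ∈ E), d a) ∧
      (∑ a ∈ Finset.univ.filter (fun a => (a, p₀) ∈ E), x (a, p₀))
        - (∑ a ∈ Finset.univ.filter (fun a => (a, p₀) ∈ E), d a) ≤ (up p₀ : ℝ))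
    (hgr : ∀ h : Fin χ, (lph p₀ h : ℝ) ≤ (∑ a ∈ grp h, x (a, p₀)) + (∑ a ∈ grp h, d a) ∧
      (∑ a ∈ grp h, x (a, p₀)) + (∑ a ∈ grp h, d a) ≤ (uph p₀ h : ℝ) ∧
      (lph p₀ h : ℝ) ≤ (∑ a ∈ grp h, x (a, p₀)) - (∑ a ∈ grp h, d a) ∧
      (∑ a ∈ grp h, x (a, p₀)) - (∑ a ∈ grp h, d a) ≤ (uph p₀ h : ℝ))
    (a₁ : A) (hd : d a₁ ≠ 0) : False := by
  have fy := gf_perturb1 E grp lp up lph uph x hfeas p₀ d hsupp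
    (fun a ha => ⟨(hbox2 a ha).1, (hbox2 a ha).2.1⟩) htot.1 htot.2.1
    (fun h => (hgr h).1) (fun h => (hgr h).2.1)
  have fz := gf_perturb1 E grp lp up lph uph x hfeas p₀ (fun a => -(d a))
    (fun a ha => by show -(d a) = 0; rw [hsupp a ha]; ring)
    (fun a ha => ⟨by show 0 ≤ x (a, p₀) + -(d a); linarith [(hbox2 a ha).2.2.1],
      by show x (a, p₀) + -(d a) ≤ 1; linarith [(hbox2 a ha).2.2.2]⟩)
    (by rw [Finset.sum_neg_distrib]; linarith [htot.2.2.1])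
    (by rw [Finset.sum_neg_distrib]; linarith [htot.2.2.2])
    (fun h => by rw [Finset.sum_neg_distrib]; linarith [(hgr h).2.2.1])
    (fun h => by rw [Finset.sum_neg_distrib]; linarith [(hgr h).2.2.2])
  have heq := hvertex _ _ fy fz (funext fun e => by
    by_cases hpp : e.2 = p₀ <;> simp [hpp] <;> ring)
  have h2 := congrFun heq (a₁, p₀)
  simp at h2
  apply hd; linarith

theorem stmt_18 {A P : Type*} [Fintype A] [Fintype P] [DecidableEq A] [DecidableEq P]
    (χ : ℕ) (E : Finset (A × P)) (grp : Fin χ → Finset A)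
    (hdisj : ∀ h h' : Fin χ, h ≠ h' → Disjoint (grp h) (grp h'))
    (hpart : ∀ a : A, ∃ h, a ∈ grp h)
    (lp up : P → ℤ) (lph uph : P → Fin χ → ℤ)
    (x : A × P → ℝ)
    (hfeas : GFFeasible E grp lp up lph uph x)
    (hvertex : ∀ y z : A × P → ℝ, GFFeasible E grp lp up lph uph y →
      GFFeasible E grp lp up lph uph z →
      x = (fun e => (1 / 2) * y e + (1 / 2) * z e) → y = z) :
    ∀ e ∈ E, x e = 0 ∨ x e = 1 := by
  classical
  obtain ⟨hbox, hzero, hplat, hgrpb⟩ := hfeas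
  have hfeas' : GFFeasible E grp lp up lph uph x := ⟨hbox, hzero, hplat, hgrpb⟩
  rintro ⟨a₀, p₀⟩ he
  by_contra hne
  push_neg at hne
  have hb := hbox _ he
  have hx0 : 0 < x (a₀, p₀) := lt_of_le_of_ne hb.1 (Ne.symm hne.1)
  have hx1 : x (a₀, p₀) < 1 := lt_of_le_of_ne hb.2 hne.2
  have ha₀N : a₀ ∈ Finset.univ.filter (fun a => (a, p₀) ∈ E) :=
    Finset.mem_filter.mpr ⟨Finset.mem_univ _, he⟩
  obtain ⟨h₀, ha₀grp⟩ := hpart a₀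
  by_cases hcase1 : ∃ h : Fin χ, ∃ b ∈ grp h, ∃ c ∈ grp h, b ≠ c ∧
      ((b, p₀) ∈ E ∧ 0 < x (b, p₀) ∧ x (b, p₀) < 1) ∧
      ((c, p₀) ∈ E ∧ 0 < x (c, p₀) ∧ x (c, p₀) < 1)
  · obtain ⟨h₁, b, hbg, c, hcg, hbc, ⟨hbE, hb0, hb1⟩, ⟨hcE, hc0, hc1⟩⟩ := hcase1
    obtain ⟨ε, hε0, e1, e2, e3, e4, -, -, -, -⟩ := exists_eps8' (x (b, p₀)) (1 - x (b, p₀))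
      (x (c, p₀)) (1 - x (c, p₀)) 1 1 1 1 hb0 (by linarith) hc0 (by linarith)
      one_pos one_pos one_pos one_pos
    have hbN : b ∈ Finset.univ.filter (fun a => (a, p₀) ∈ E) :=
      Finset.mem_filter.mpr ⟨Finset.mem_univ _, hbE⟩
    have hcN : c ∈ Finset.univ.filter (fun a => (a, p₀) ∈ E) :=
      Finset.mem_filter.mpr ⟨Finset.mem_univ _, hcE⟩
    have SdN : ∑ a ∈ Finset.univ.filter (fun a => (a, p₀) ∈ E),
        (if a = b then ε else if a = c then -ε else 0) = 0 := by
      rw [sum_two' _ _ _ hbc]; simp [hbN, hcN]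
    have Sdg : ∀ h : Fin χ, ∑ a ∈ grp h, (if a = b then ε else if a = c then -ε else 0) = 0 := by
      intro h
      rw [sum_two' _ _ _ hbc]
      by_cases hh : h = h₁
      · subst hh; simp [hbg, hcg]
      · have hb' : b ∉ grp h := Finset.disjoint_right.mp (hdisj h h₁ hh) hbg
        have hc' : c ∉ grp h := Finset.disjoint_right.mp (hdisj h h₁ hh) hcg
        simp [hb', hc']
    refine gf_vertex_perturb E grp lp up lph uph x hfeas' hvertex p₀
      (fun a => if a = b then ε else if a = c then -ε else 0) ?_ ?_ ?_ ?_ b ?_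
    · intro a ha
      have h1 : a ≠ b := fun h => ha (h ▸ hbE)
      have h2 : a ≠ c := fun h => ha (h ▸ hcE)
      simp [h1, h2]
    · intro a ha
      by_cases h1 : a = b
      · have hda : (if a = b then ε else if a = c then -ε else 0) = ε := if_pos h1
        simp only [hda]
        subst h1
        refine ⟨by linarith, by linarith, by linarith, by linarith⟩
      · by_cases h2 : a = c
        · have hda : (if a = b then ε else if a = c then -ε else 0) = -ε := by
            rw [if_neg h1, if_pos h2]
          simp only [hda]
          subst h2
          refine ⟨by linarith, by linarith, by linarith, by linarith⟩
        · have hda : (if a = b then ε else if a = c then -ε else 0) = 0 := by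
            rw [if_neg h1, if_neg h2]
          have hb' := hbox _ ha
          simp only [hda, add_zero, sub_zero]
          exact ⟨hb'.1, hb'.2, hb'.1, hb'.2⟩
    · simp only [SdN]
      have := hplat p₀
      refine ⟨by linarith [this.1], by linarith [this.2], by linarith [this.1],
        by linarith [this.2]⟩
    · intro h
      simp only [Sdg h]
      have := hgrpb p₀ h
      refine ⟨by linarith [this.1], by linarith [this.2], by linarith [this.1],
        by linarith [this.2]⟩
    · simp [hε0.ne']
  · have huniq : ∀ (h : Fin χ) (b c : A), b ∈ grp h → c ∈ grp h →
        ((b, p₀) ∈ E ∧ 0 < x (b, p₀) ∧ x (b, p₀) < 1) →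
        ((c, p₀) ∈ E ∧ 0 < x (c, p₀) ∧ x (c, p₀) < 1) → b = c := by
      intro h b c hbg hcg hFb hFc
      by_contra hbc
      exact hcase1 ⟨h, b, hbg, c, hcg, hbc, hFb, hFc⟩
    have hFa₀ : (a₀, p₀) ∈ E ∧ 0 < x (a₀, p₀) ∧ x (a₀, p₀) < 1 := ⟨he, hx0, hx1⟩
    have hgstrict : ∀ (h : Fin χ) (a : A), a ∈ grp h →
        ((a, p₀) ∈ E ∧ 0 < x (a, p₀) ∧ x (a, p₀) < 1) →
        (lph p₀ h : ℝ) < ∑ a ∈ grp h, x (a, p₀) ∧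
          ∑ a ∈ grp h, x (a, p₀) < (uph p₀ h : ℝ) := by
      intro h a ha hFa
      have hoth : ∀ c ∈ (grp h).erase a, x (c, p₀) = 0 ∨ x (c, p₀) = 1 := by
        intro c hc
        have hcg := Finset.mem_of_mem_erase hc
        have hca : c ≠ a := Finset.ne_of_mem_erase hc
        by_cases hcE : (c, p₀) ∈ E
        · have hcb := hbox _ hcE
          rcases eq_or_lt_of_le hcb.1 with h1 | h1
          · exact Or.inl h1.symm
          · right
            by_contra h2
            exact hca (huniq h c a hcg ha ⟨hcE, h1, lt_of_le_of_ne hcb.2 h2⟩ hFa)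
        · exact Or.inl (hzero _ hcE)
      obtain ⟨n, hn⟩ := exists_int_sum' ((grp h).erase a) (fun c => x (c, p₀)) hoth
      have hsum : ∑ c ∈ grp h, x (c, p₀) = x (a, p₀) + n := by
        rw [← Finset.add_sum_erase _ _ ha, hn]
      rw [hsum]
      exact strict_between' _ _ n _ hFa.2.1 hFa.2.2 (hsum ▸ (hgrpb p₀ h).1)
        (hsum ▸ (hgrpb p₀ h).2)
    by_cases hcase2 : ∃ b, b ≠ a₀ ∧ ((b, p₀) ∈ E ∧ 0 < x (b, p₀) ∧ x (b, p₀) < 1)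
    · obtain ⟨b, hba, hFb⟩ := hcase2
      obtain ⟨h₁, hbg⟩ := hpart b
      have hne10 : h₁ ≠ h₀ := by
        intro hEq
        subst hEq
        exact hba (huniq h₁ b a₀ hbg ha₀grp hFb hFa₀)
      have hs0 := hgstrict h₀ a₀ ha₀grp hFa₀
      have hs1 := hgstrict h₁ b hbg hFb
      obtain ⟨ε, hε0, e1, e2, e3, e4, e5, e6, e7, e8⟩ := exists_eps8' (x (a₀, p₀))
        (1 - x (a₀, p₀)) (x (b, p₀)) (1 - x (b, p₀))
        ((∑ a ∈ grp h₀, x (a, p₀)) - lph p₀ h₀) ((uph p₀ h₀ : ℝ) - ∑ a ∈ grp h₀, x (a, p₀))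
        ((∑ a ∈ grp h₁, x (a, p₀)) - lph p₀ h₁) ((uph p₀ h₁ : ℝ) - ∑ a ∈ grp h₁, x (a, p₀))
        hx0 (by linarith) hFb.2.1 (by linarith [hFb.2.2]) (by linarith [hs0.1])
        (by linarith [hs0.2]) (by linarith [hs1.1]) (by linarith [hs1.2])
      have hab : a₀ ≠ b := fun h => hba h.symm
      have hbN : b ∈ Finset.univ.filter (fun a => (a, p₀) ∈ E) :=
        Finset.mem_filter.mpr ⟨Finset.mem_univ _, hFb.1⟩
      have SdN : ∑ a ∈ Finset.univ.filter (fun a => (a, p₀) ∈ E),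
          (if a = a₀ then ε else if a = b then -ε else 0) = 0 := by
        rw [sum_two' _ _ _ hab]; simp [ha₀N, hbN]
      refine gf_vertex_perturb E grp lp up lph uph x hfeas' hvertex p₀
        (fun a => if a = a₀ then ε else if a = b then -ε else 0) ?_ ?_ ?_ ?_ a₀ ?_
      · intro a ha
        have h1 : a ≠ a₀ := fun h => ha (h ▸ he)
        have h2 : a ≠ b := fun h => ha (h ▸ hFb.1)
        simp [h1, h2]
      · intro a ha
        by_cases h1 : a = a₀
        · have hda : (if a = a₀ then ε else if a = b then -ε else 0) = ε := if_pos h1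
          simp only [hda]
          subst h1
          refine ⟨by linarith, by linarith, by linarith, by linarith⟩
        · by_cases h2 : a = b
          · have hda : (if a = a₀ then ε else if a = b then -ε else 0) = -ε := by
              rw [if_neg h1, if_pos h2]
            simp only [hda]
            subst h2
            have := hFb.2
            refine ⟨by linarith [this.1], by linarith [this.2], by linarith [this.1],
              by linarith [this.2]⟩
          · have hda : (if a = a₀ then ε else if a = b then -ε else 0) = 0 := by
              rw [if_neg h1, if_neg h2]
            have hb' := hbox _ ha
            simp only [hda, add_zero, sub_zero]
            exact ⟨hb'.1, hb'.2, hb'.1, hb'.2⟩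
      · simp only [SdN]
        have := hplat p₀
        refine ⟨by linarith [this.1], by linarith [this.2], by linarith [this.1],
          by linarith [this.2]⟩
      · intro h
        by_cases hh0 : h = h₀
        · subst hh0
          have hG : ∑ a ∈ grp h, (if a = a₀ then ε else if a = b then -ε else 0) = ε := by
            rw [sum_two' _ _ _ hab]
            have hb' : b ∉ grp h := Finset.disjoint_right.mp (hdisj h h₁ (Ne.symm hne10)) hbg
            simp [ha₀grp, hb']
          simp only [hG]
          refine ⟨by linarith [hs0.1], by linarith [hs0.2], by linarith [hs0.1],
            by linarith [hs0.2]⟩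
        · by_cases hh1 : h = h₁
          · subst hh1
            have hG : ∑ a ∈ grp h, (if a = a₀ then ε else if a = b then -ε else 0) = -ε := by
              rw [sum_two' _ _ _ hab]
              have ha' : a₀ ∉ grp h := Finset.disjoint_right.mp (hdisj h h₀ hne10) ha₀grp
              simp [ha', hbg]
            simp only [hG]
            refine ⟨by linarith [hs1.1], by linarith [hs1.2], by linarith [hs1.1],
              by linarith [hs1.2]⟩
          · have ha' : a₀ ∉ grp h := Finset.disjoint_right.mp (hdisj h h₀ hh0) ha₀grp
            have hb' : b ∉ grp h := Finset.disjoint_right.mp (hdisj h h₁ hh1) hbg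
            have hG : ∑ a ∈ grp h, (if a = a₀ then ε else if a = b then -ε else 0) = 0 := by
              rw [sum_two' _ _ _ hab]; simp [ha', hb']
            simp only [hG]
            have := hgrpb p₀ h
            refine ⟨by linarith [this.1], by linarith [this.2], by linarith [this.1],
              by linarith [this.2]⟩
      · simp [hε0.ne']
    · have hall : ∀ b, ((b, p₀) ∈ E ∧ 0 < x (b, p₀) ∧ x (b, p₀) < 1) → b = a₀ := by
        intro b hFb
        by_contra h
        exact hcase2 ⟨b, h, hFb⟩
      have hs0 := hgstrict h₀ a₀ ha₀grp hFa₀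
      have hothN : ∀ c ∈ (Finset.univ.filter (fun a => (a, p₀) ∈ E)).erase a₀,
          x (c, p₀) = 0 ∨ x (c, p₀) = 1 := by
        intro c hc
        have hcE : (c, p₀) ∈ E := (Finset.mem_filter.mp (Finset.mem_of_mem_erase hc)).2
        have hca : c ≠ a₀ := Finset.ne_of_mem_erase hc
        have hcb := hbox _ hcE
        rcases eq_or_lt_of_le hcb.1 with h1 | h1
        · exact Or.inl h1.symm
        · right
          by_contra h2
          exact hca (hall c ⟨hcE, h1, lt_of_le_of_ne hcb.2 h2⟩)
      obtain ⟨n, hn⟩ := exists_int_sum' _ (fun c => x (c, p₀)) hothN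
      have hsum : ∑ c ∈ Finset.univ.filter (fun a => (a, p₀) ∈ E), x (c, p₀)
          = x (a₀, p₀) + n := by
        rw [← Finset.add_sum_erase _ _ ha₀N, hn]
      have hTs := strict_between' (lp p₀) (up p₀) n _ hx0 hx1 (hsum ▸ (hplat p₀).1)
        (hsum ▸ (hplat p₀).2)
      rw [← hsum] at hTs
      obtain ⟨ε, hε0, e1, e2, e3, e4, e5, e6, -, -⟩ := exists_eps8' (x (a₀, p₀))
        (1 - x (a₀, p₀))
        ((∑ a ∈ Finset.univ.filter (fun a => (a, p₀) ∈ E), x (a, p₀)) - lp p₀)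
        ((up p₀ : ℝ) - ∑ a ∈ Finset.univ.filter (fun a => (a, p₀) ∈ E), x (a, p₀))
        ((∑ a ∈ grp h₀, x (a, p₀)) - lph p₀ h₀)
        ((uph p₀ h₀ : ℝ) - ∑ a ∈ grp h₀, x (a, p₀)) 1 1
        hx0 (by linarith) (by linarith [hTs.1]) (by linarith [hTs.2])
        (by linarith [hs0.1]) (by linarith [hs0.2]) one_pos one_pos
      have SdN : ∑ a ∈ Finset.univ.filter (fun a => (a, p₀) ∈ E),
          (if a = a₀ then ε else 0) = ε := by
        rw [Finset.sum_ite_eq' _ a₀ (fun _ => ε), if_pos ha₀N]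
      refine gf_vertex_perturb E grp lp up lph uph x hfeas' hvertex p₀
        (fun a => if a = a₀ then ε else 0) ?_ ?_ ?_ ?_ a₀ ?_
      · intro a ha
        have h1 : a ≠ a₀ := fun h => ha (h ▸ he)
        simp [h1]
      · intro a ha
        by_cases h1 : a = a₀
        · have hda : (if a = a₀ then ε else 0) = ε := if_pos h1
          simp only [hda]
          subst h1
          refine ⟨by linarith, by linarith, by linarith, by linarith⟩
        · have hda : (if a = a₀ then ε else 0) = 0 := if_neg h1
          have hb' := hbox _ ha
          simp only [hda, add_zero, sub_zero]
          exact ⟨hb'.1, hb'.2, hb'.1, hb'.2⟩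
      · simp only [SdN]
        refine ⟨by linarith [hTs.1], by linarith [hTs.2], by linarith [hTs.1],
          by linarith [hTs.2]⟩
      · intro h
        by_cases hh0 : h = h₀
        · subst hh0
          have hG : ∑ a ∈ grp h, (if a = a₀ then ε else 0) = ε := by
            rw [Finset.sum_ite_eq' _ a₀ (fun _ => ε), if_pos ha₀grp]
          simp only [hG]
          refine ⟨by linarith [hs0.1], by linarith [hs0.2], by linarith [hs0.1],
            by linarith [hs0.2]⟩
        · have ha' : a₀ ∉ grp h := Finset.disjoint_right.mp (hdisj h h₀ hh0) ha₀grp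
          have hG : ∑ a ∈ grp h, (if a = a₀ then ε else 0) = 0 := by
            rw [Finset.sum_ite_eq' _ a₀ (fun _ => ε), if_neg ha']
          simp only [hG]
          have := hgrpb p₀ h
          refine ⟨by linarith [this.1], by linarith [this.2], by linarith [this.1],
            by linarith [this.2]⟩
      · simp [hε0.ne']
end
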